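/- Let m ≥ 2 and n ≥ 1 be integers, let q be an integer, and let p_1, …, p_n be integers each coprime to m. Then the complex number i^{−n} · ∑_{l=1}^{m−1} e^{2πilq/m} · ∏_{j=1}^{n} cot(πlp_j/m) is real, i.e. its imaginary part is zero. -/

import Mathlib

open Complex Real Finset

lemma cot_int_pi_sub (x : ℝ) (k : ℤ) : Real.cot (k * Real.pi - x) = - Real.cot x := by
  rw [Real.cot_eq_cos_div_sin, Real.cot_eq_cos_div_sin, Real.cos_int_mul_pi_sub,
    Real.sin_int_mul_pi_sub]
  rcases Int.even_or_odd k with h | h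
  · rw [h.neg_one_zpow]; ring
  · rw [h.neg_one_zpow]; ring

/-- The eta invariant of a lens space is real (Proposition 5.4):
`i^{−n} · ∑_{l=1}^{m−1} e^{2πilq/m} ∏_j cot(πlp_j/m)` has zero imaginary part. -/
theorem stmt_7 (m n : ℕ) (hm : 2 ≤ m) (hn : 1 ≤ n) (q : ℤ)
    (p : Fin n → ℤ) (hp : ∀ j, IsCoprime (p j) (m : ℤ)) :
    (Complex.I ^ (-(n : ℤ)) *
      ∑ l ∈ Finset.Icc 1 (m - 1),
        Complex.exp (2 * Real.pi * Complex.I * (l : ℂ) * (q : ℂ) / (m : ℂ)) *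
          ∏ j, (Real.cot (Real.pi * (l : ℝ) * (p j : ℝ) / (m : ℝ)) : ℂ)).im = 0 := by
  have hm0 : (m : ℝ) ≠ 0 := by positivity
  have hm0' : (m : ℂ) ≠ 0 := by exact_mod_cast Nat.cast_ne_zero.mpr (by omega)
  set f : ℕ → ℂ := fun l =>
    Complex.exp (2 * Real.pi * Complex.I * (l : ℂ) * (q : ℂ) / (m : ℂ)) *
      ∏ j, (Real.cot (Real.pi * (l : ℝ) * (p j : ℝ) / (m : ℝ)) : ℂ) with hf
  -- key: conj (f l) = (-1)^n * f (m - l)  for l ∈ Icc 1 (m-1)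
  have key : ∀ l ∈ Finset.Icc 1 (m - 1), (starRingEnd ℂ) (f l) = (-1 : ℂ) ^ n * f (m - l) := by
    intro l hl
    simp only [Finset.mem_Icc] at hl
    have hlm : l ≤ m := by omega
    have hcast : ((m - l : ℕ) : ℂ) = (m : ℂ) - (l : ℂ) := by push_cast [hlm]; ring
    have hcastR : ((m - l : ℕ) : ℝ) = (m : ℝ) - (l : ℝ) := by push_cast [hlm]; ring
    have hexp : Complex.exp (2 * Real.pi * Complex.I * ((m - l : ℕ) : ℂ) * (q : ℂ) / (m : ℂ))
        = Complex.exp (-(2 * Real.pi * Complex.I * (l : ℂ) * (q : ℂ) / (m : ℂ))) := by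
      rw [hcast]
      have : 2 * Real.pi * Complex.I * ((m : ℂ) - (l : ℂ)) * (q : ℂ) / (m : ℂ)
          = (q : ℂ) * (2 * Real.pi * Complex.I) + -(2 * Real.pi * Complex.I * (l : ℂ) * (q : ℂ) / (m : ℂ)) := by
        field_simp; ring
      rw [this, Complex.exp_add, Complex.exp_int_mul_two_pi_mul_I, one_mul]
    have hcot : ∀ j, Real.cot (Real.pi * ((m - l : ℕ) : ℝ) * (p j : ℝ) / (m : ℝ))
        = - Real.cot (Real.pi * (l : ℝ) * (p j : ℝ) / (m : ℝ)) := by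
      intro j
      have : Real.pi * ((m - l : ℕ) : ℝ) * (p j : ℝ) / (m : ℝ)
          = (p j : ℝ) * Real.pi - Real.pi * (l : ℝ) * (p j : ℝ) / (m : ℝ) := by
        rw [hcastR]; field_simp
      rw [this, cot_int_pi_sub]
    have hconj : (starRingEnd ℂ) (f l)
        = Complex.exp (-(2 * Real.pi * Complex.I * (l : ℂ) * (q : ℂ) / (m : ℂ))) *
          ∏ j, (Real.cot (Real.pi * (l : ℝ) * (p j : ℝ) / (m : ℝ)) : ℂ) := by
      rw [hf]
      simp only [map_mul, map_prod, Complex.conj_ofReal, ← Complex.exp_conj]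
      congr 2
      simp only [map_div₀, map_mul, Complex.conj_I, Complex.conj_ofReal, map_ofNat,
        map_intCast, map_natCast]
      ring
    rw [hconj, hf]
    simp only [hexp, hcot, Complex.ofReal_neg]
    have : (∏ j, -((Real.cot (Real.pi * (l : ℝ) * (p j : ℝ) / (m : ℝ)) : ℂ)))
        = (-1 : ℂ) ^ n * ∏ j, ((Real.cot (Real.pi * (l : ℝ) * (p j : ℝ) / (m : ℝ)) : ℂ)) := by
      calc ∏ j, -((Real.cot (Real.pi * (l : ℝ) * (p j : ℝ) / (m : ℝ)) : ℂ))
          = ∏ j, ((-1 : ℂ) * (Real.cot (Real.pi * (l : ℝ) * (p j : ℝ) / (m : ℝ)) : ℂ)) := by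
            apply Finset.prod_congr rfl; intro j _; ring
        _ = (∏ _j : Fin n, (-1 : ℂ)) *
              ∏ j, ((Real.cot (Real.pi * (l : ℝ) * (p j : ℝ) / (m : ℝ)) : ℂ)) :=
            Finset.prod_mul_distrib
        _ = (-1 : ℂ) ^ n * ∏ j, ((Real.cot (Real.pi * (l : ℝ) * (p j : ℝ) / (m : ℝ)) : ℂ)) := by
            rw [Finset.prod_const, Finset.card_univ, Fintype.card_fin]
    rw [this]
    have h2 : (-1 : ℂ) ^ n * (-1 : ℂ) ^ n = 1 := by
      rw [← pow_add]; exact Even.neg_one_pow ⟨n, rfl⟩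
    linear_combination (-(Complex.exp (-(2 * (Real.pi : ℂ) * Complex.I * (l : ℂ) * (q : ℂ) / (m : ℂ))) *
      ∏ j, ((Real.cot (Real.pi * (l : ℝ) * (p j : ℝ) / (m : ℝ)) : ℂ)))) * h2
  rw [← Complex.conj_eq_iff_im, map_mul, map_sum, Finset.sum_congr rfl key, ← Finset.mul_sum]
  have hbij : ∑ l ∈ Finset.Icc 1 (m - 1), f (m - l) = ∑ l ∈ Finset.Icc 1 (m - 1), f l := by
    refine Finset.sum_nbij' (fun l => m - l) (fun l => m - l) ?_ ?_ ?_ ?_ (fun a ha => rfl) <;>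
      (intro a ha; simp only [Finset.mem_Icc] at *; omega)
  rw [hbij]
  rw [map_zpow₀, Complex.conj_I]
  have hI : (-Complex.I) ^ (-(n : ℤ)) * (-1 : ℂ) ^ n = Complex.I ^ (-(n : ℤ)) := by
    have h1 : (-Complex.I) = (-1) * Complex.I := by ring
    rw [h1, mul_zpow, zpow_neg ((-1 : ℂ)), zpow_natCast]
    have h2 : ((-1 : ℂ) ^ n)⁻¹ * (-1 : ℂ) ^ n = 1 := inv_mul_cancel₀ (pow_ne_zero _ (by norm_num))
    calc ((-1 : ℂ) ^ n)⁻¹ * Complex.I ^ (-(n : ℤ)) * (-1 : ℂ) ^ n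
        = (((-1 : ℂ) ^ n)⁻¹ * (-1 : ℂ) ^ n) * Complex.I ^ (-(n : ℤ)) := by ring
      _ = Complex.I ^ (-(n : ℤ)) := by rw [h2, one_mul]
  rw [← mul_assoc, hI]
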